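/- Let Σ = (X, 𝒟, φ) be a robustly forward complete system. If there exists a nonempty, bounded, uniformly globally weakly attractive set A ⊆ X, then A is Lagrange stable; in particular Σ is Lagrange stable. -/

import Mathlib

open scoped NNReal ENNReal
open Filter Topology Bornology

noncomputable section

/-- Functions of class 𝒦: continuous, strictly increasing, vanishing at zero. -/
def ClassK (γ : ℝ≥0 → ℝ≥0) : Prop :=
  Continuous γ ∧ StrictMono γ ∧ γ 0 = 0

/-- Functions of class 𝒦∞: class 𝒦 and unbounded. -/
def ClassKinf (γ : ℝ≥0 → ℝ≥0) : Prop :=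
  ClassK γ ∧ ∀ M : ℝ≥0, ∃ r : ℝ≥0, M < γ r

/-- Functions of class 𝒦ℒ. -/
def ClassKL (β : ℝ≥0 → ℝ≥0 → ℝ≥0) : Prop :=
  Continuous (fun p : ℝ≥0 × ℝ≥0 => β p.1 p.2) ∧
  (∀ t : ℝ≥0, ClassK fun r => β r t) ∧
  ∀ r : ℝ≥0, 0 < r →
    StrictAnti (fun t => β r t) ∧ Tendsto (fun t => β r t) atTop (𝓝 0)

/-- Distance of a point to a set, `‖x‖_A`. -/
def dA {X : Type*} [NormedAddCommGroup X] (A : Set X) (x : X) : ℝ≥0 :=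
  (Metric.infDist x A).toNNReal

/-- The open ε-neighborhood `B_ε(A)` of a set. -/
def ballSet {X : Type*} [NormedAddCommGroup X] (ε : ℝ≥0) (A : Set X) : Set X :=
  {x | dA A x < ε}

/-- A (time-invariant) control system with disturbances. -/
structure System (X : Type*) [NormedAddCommGroup X] [NormedSpace ℝ X]
    (W : Type*) [NormedAddCommGroup W] [NormedSpace ℝ W] where
  /-- the set of disturbance values -/
  D : Set W
  D_nonempty : D.Nonempty
  /-- the space of disturbances -/
  Dist : Set (ℝ≥0 → W)
  dist_mem : ∀ d ∈ Dist, ∀ t : ℝ≥0, d t ∈ D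
  /-- axiom of shift invariance -/
  shift_invariant : ∀ d ∈ Dist, ∀ τ : ℝ≥0, (fun t => d (t + τ)) ∈ Dist
  /-- axiom of concatenation -/
  concat_mem : ∀ d₁ ∈ Dist, ∀ d₂ ∈ Dist, ∀ t : ℝ≥0, 0 < t →
      (fun s => if s ≤ t then d₁ s else d₂ (s - t)) ∈ Dist
  /-- the transition map -/
  φ : ℝ≥0 → X → (ℝ≥0 → W) → X
  identity : ∀ (x : X), ∀ d ∈ Dist, φ 0 x d = x
  causality : ∀ (t : ℝ≥0) (x : X), ∀ d ∈ Dist, ∀ d' ∈ Dist,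
      (∀ s ≤ t, d s = d' s) → φ t x d = φ t x d'
  cont : ∀ (x : X), ∀ d ∈ Dist, Continuous fun t : ℝ≥0 => φ t x d
  cocycle : ∀ (t h : ℝ≥0) (x : X), ∀ d ∈ Dist,
      φ h (φ t x d) (fun s => d (t + s)) = φ (t + h) x d

namespace System

variable {X : Type*} [NormedAddCommGroup X] [NormedSpace ℝ X]
variable {W : Type*} [NormedAddCommGroup W] [NormedSpace ℝ W]
variable (S : System X W)

/-- Reachability set within time `T`. -/
def RT (T : ℝ≥0) (B : Set X) : Set X :=
  {y | ∃ t ≤ T, ∃ d ∈ S.Dist, ∃ x ∈ B, y = S.φ t x d}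

/-- Reachability set. -/
def R (B : Set X) : Set X :=
  {y | ∃ t : ℝ≥0, ∃ d ∈ S.Dist, ∃ x ∈ B, y = S.φ t x d}

/-- Robust forward completeness. -/
def RFC : Prop :=
  ∀ C : ℝ≥0, 0 < C → ∀ τ : ℝ≥0, 0 < τ →
    IsBounded (S.RT τ {x : X | ‖x‖₊ ≤ C})

/-- Invariance of a set. -/
def Invariant (A : Set X) : Prop := S.R A ⊆ A

/-- Robust invariance of a set. -/
def RobustlyInvariant (A : Set X) : Prop :=
  S.Invariant A ∧
  ∀ ε : ℝ≥0, 0 < ε → ∀ h : ℝ≥0, 0 < h → ∃ δ : ℝ≥0, 0 < δ ∧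
    ∀ t : ℝ≥0, t ≤ h → ∀ x : X, dA A x ≤ δ → ∀ d ∈ S.Dist, dA A (S.φ t x d) ≤ ε

/-- Lagrange stability of a set. -/
def LagrangeStable (A : Set X) : Prop :=
  ∃ σ : ℝ≥0 → ℝ≥0, ClassKinf σ ∧ ∃ c : ℝ≥0, 0 < c ∧
    ∀ (x : X), ∀ d ∈ S.Dist, ∀ t : ℝ≥0, dA A (S.φ t x d) ≤ σ (dA A x) + c

/-- Uniform (local) stability of a set. -/
def ULS (A : Set X) : Prop :=
  ∀ ε : ℝ≥0, 0 < ε → ∃ δ : ℝ≥0, 0 < δ ∧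
    ∀ x : X, dA A x ≤ δ → ∀ d ∈ S.Dist, ∀ t : ℝ≥0, dA A (S.φ t x d) ≤ ε

/-- Uniform global stability of a set. -/
def UGS (A : Set X) : Prop :=
  ∃ σ : ℝ≥0 → ℝ≥0, ClassKinf σ ∧
    ∀ (x : X), ∀ d ∈ S.Dist, ∀ t : ℝ≥0, dA A (S.φ t x d) ≤ σ (dA A x)

/-- Uniform global asymptotic stability of a set. -/
def UGAS (A : Set X) : Prop :=
  ∃ β : ℝ≥0 → ℝ≥0 → ℝ≥0, ClassKL β ∧
    ∀ (x : X), ∀ d ∈ S.Dist, ∀ t : ℝ≥0, dA A (S.φ t x d) ≤ β (dA A x) t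

/-- Practical uniform global asymptotic stability of a set. -/
def PUGASSet (A : Set X) : Prop :=
  ∃ β : ℝ≥0 → ℝ≥0 → ℝ≥0, ClassKL β ∧ ∃ c : ℝ≥0, 0 < c ∧
    ∀ (x : X), ∀ d ∈ S.Dist, ∀ t : ℝ≥0, dA A (S.φ t x d) ≤ β (dA A x) t + c

/-- Global weak attractivity of a set. -/
def GWA (A : Set X) : Prop :=
  ∀ (x : X), ∀ d ∈ S.Dist, ∀ ε : ℝ≥0, 0 < ε → ∃ t : ℝ≥0, dA A (S.φ t x d) ≤ ε

/-- Uniform global weak attractivity of a set. -/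
def UGWA (A : Set X) : Prop :=
  ∀ ε : ℝ≥0, 0 < ε → ∀ r : ℝ≥0, 0 < r → ∃ τ : ℝ≥0,
    ∀ x : X, dA A x ≤ r → ∀ d ∈ S.Dist, ∃ t ≤ τ, dA A (S.φ t x d) ≤ ε

/-- Uniform global attractivity of a set. -/
def UGATT (A : Set X) : Prop :=
  ∀ ε : ℝ≥0, 0 < ε → ∀ r : ℝ≥0, 0 < r → ∃ τ : ℝ≥0,
    ∀ x : X, dA A x ≤ r → ∀ d ∈ S.Dist, ∀ t : ℝ≥0, τ ≤ t → dA A (S.φ t x d) ≤ ε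

/-- Uniform ultimate boundedness of the system. -/
def UUB : Prop :=
  ∃ K : ℝ≥0, 0 < K ∧ ∀ r : ℝ≥0, 0 < r → ∃ T : ℝ≥0,
    ∀ x : X, ‖x‖₊ ≤ r → ∀ d ∈ S.Dist, ∀ t : ℝ≥0, T ≤ t → ‖S.φ t x d‖₊ ≤ K

/-- Global recurrence of a set. -/
def GloballyRecurrent (A : Set X) : Prop :=
  ∀ (x : X), ∀ d ∈ S.Dist, ∃ t : ℝ≥0, S.φ t x d ∈ A

/-- Uniform global recurrence of a set. -/
def UniformlyGloballyRecurrent (A : Set X) : Prop :=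
  ∀ R : ℝ≥0, 0 < R → ∃ τ : ℝ≥0,
    ∀ x : X, dA A x ≤ R → ∀ d ∈ S.Dist, ∃ t ≤ τ, S.φ t x d ∈ A

/-- The set `P₊(A) = ⋂_{ε>0} ℛ(B_ε(A))`. -/
def Pplus (A : Set X) : Set X := ⋂ (ε : ℝ≥0) (_ : 0 < ε), S.R (ballSet ε A)

/-- Non-coercive Lyapunov function w.r.t. a bounded set `A`. -/
def NonCoerciveLyapunov (A : Set X) (V : X → ℝ) : Prop :=
  Continuous V ∧ (∀ x : X, 0 ≤ V x) ∧ (∀ x ∈ A, V x = 0) ∧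
  (∃ ψ₂ : ℝ≥0 → ℝ≥0, ClassKinf ψ₂ ∧
    ∀ x ∉ A, 0 < V x ∧ V x ≤ (ψ₂ (dA A x) : ℝ)) ∧
  (∃ α : ℝ≥0 → ℝ≥0, ClassK α ∧ ∀ x ∉ A, ∀ d ∈ S.Dist,
    Filter.liminf (fun t : ℝ≥0 => (V (S.φ t x d) - V x) / (t : ℝ))
      (𝓝[>] (0 : ℝ≥0)) ≤ -(α (dA A x) : ℝ))

/-- The system is Lagrange stable if some bounded nonempty set is Lagrange stable. -/
def SystemLagrangeStable : Prop :=
  ∃ A : Set X, A.Nonempty ∧ IsBounded A ∧ S.LagrangeStable A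

/-- The system is pUGAS if some bounded nonempty set is pUGAS. -/
def SystemPUGAS : Prop :=
  ∃ A : Set X, A.Nonempty ∧ IsBounded A ∧ S.PUGASSet A

end System
open Finset in
section
namespace Stmt8Aux

def phik (k : ℕ) (r : ℝ≥0) : ℝ≥0 := min 1 (r - (k : ℝ≥0))

def gNsum (a : ℕ → ℝ≥0) (N : ℕ) (r : ℝ≥0) : ℝ≥0 :=
  ∑ k ∈ Finset.range N, (a (k+2) - a (k+1)) * phik k r

def Gfun (a : ℕ → ℝ≥0) (r : ℝ≥0) : ℝ≥0 := gNsum a ⌈r⌉₊ r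

lemma phik_eq_zero {k : ℕ} {r : ℝ≥0} (h : r ≤ k) : phik k r = 0 := by
  simp [phik, tsub_eq_zero_of_le h]

lemma phik_eq_one {k : ℕ} {r : ℝ≥0} (h : (k : ℝ≥0) + 1 ≤ r) : phik k r = 1 := by
  have : (1 : ℝ≥0) ≤ r - k := by
    rw [le_tsub_iff_right (le_trans (le_add_of_nonneg_right zero_le') h)]
    rwa [add_comm] at h
  simp [phik, min_eq_left this]

lemma phik_mono (k : ℕ) : Monotone (phik k) := fun r1 r2 h =>
  min_le_min le_rfl (tsub_le_tsub_right h _)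

lemma gNsum_stable (a : ℕ → ℝ≥0) {N : ℕ} {r : ℝ≥0} (h : r ≤ N) :
    gNsum a N r = Gfun a r := by
  refine (Finset.sum_subset (Finset.range_subset_range.mpr (Nat.ceil_le.mpr h)) ?_).symm
  intro k hk hk'
  have hkr : r ≤ k := le_trans (Nat.le_ceil r) (by
    exact_mod_cast Nat.cast_le.mpr (le_of_not_gt (fun hl => hk' (Finset.mem_range.mpr hl))))
  simp [phik_eq_zero hkr]

lemma gNsum_mono (a : ℕ → ℝ≥0) (N : ℕ) : Monotone (gNsum a N) := by
  intro r1 r2 h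
  exact Finset.sum_le_sum fun k _ => mul_le_mul_right (phik_mono k h) _

lemma Gfun_mono (a : ℕ → ℝ≥0) : Monotone (Gfun a) := by
  intro r1 r2 h
  rw [← gNsum_stable a (le_trans h (Nat.le_ceil r2)), ← gNsum_stable a (Nat.le_ceil r2)]
  exact gNsum_mono a _ h

lemma gNsum_continuous (a : ℕ → ℝ≥0) (N : ℕ) : Continuous (gNsum a N) := by
  unfold gNsum
  refine continuous_finset_sum _ fun k _ => Continuous.mul continuous_const ?_
  exact Continuous.min continuous_const (Continuous.sub continuous_id continuous_const)

lemma Gfun_continuous (a : ℕ → ℝ≥0) : Continuous (Gfun a) := by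
  rw [continuous_iff_continuousAt]
  intro r
  have hN : r < ((⌈r⌉₊ + 1 : ℕ) : ℝ≥0) := lt_of_le_of_lt (Nat.le_ceil r) (by exact_mod_cast Nat.lt_succ_self _)
  have hmem : {s : ℝ≥0 | s < ((⌈r⌉₊ + 1 : ℕ) : ℝ≥0)} ∈ nhds r := (isOpen_Iio).mem_nhds hN
  refine ContinuousAt.congr ((gNsum_continuous a (⌈r⌉₊ + 1)).continuousAt) ?_
  filter_upwards [hmem] with s hs
  exact gNsum_stable a (le_of_lt hs)

lemma telescope (a : ℕ → ℝ≥0) (ha : Monotone a) (n : ℕ) :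
    ∑ k ∈ Finset.range n, (a (k+2) - a (k+1)) = a (n+1) - a 1 := by
  induction n with
  | zero => simp
  | succ n ih =>
      rw [Finset.sum_range_succ, ih, add_comm,
        tsub_add_tsub_cancel (ha (by omega)) (ha (by omega))]

lemma Gfun_lower (a : ℕ → ℝ≥0) (ha : Monotone a) (r : ℝ≥0) :
    a ⌈r⌉₊ ≤ Gfun a r + a 1 := by
  cases hn : ⌈r⌉₊ with
  | zero => exact le_add_left (ha (by omega))
  | succ n =>
      have hnr : (n : ℝ≥0) < r := Nat.lt_ceil.mp (by omega)
      have key : ∑ k ∈ Finset.range n, (a (k+2) - a (k+1)) ≤ Gfun a r := by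
        rw [Gfun, hn]
        calc ∑ k ∈ Finset.range n, (a (k+2) - a (k+1))
            = ∑ k ∈ Finset.range n, (a (k+2) - a (k+1)) * phik k r := by
              refine Finset.sum_congr rfl fun k hk => ?_
              have hk' : (k : ℝ≥0) + 1 ≤ r := by
                have : ((k+1 : ℕ) : ℝ≥0) ≤ (n : ℝ≥0) := by
                  exact_mod_cast Nat.cast_le.mpr (Finset.mem_range.mp hk)
                push_cast at this
                exact le_trans this hnr.le
              rw [phik_eq_one hk', mul_one]
          _ ≤ ∑ k ∈ Finset.range (n+1), (a (k+2) - a (k+1)) * phik k r :=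
              Finset.sum_le_sum_of_subset (Finset.range_subset_range.mpr (by omega))
      rw [telescope a ha n] at key
      calc a (n+1) = a (n+1) - a 1 + a 1 := (tsub_add_cancel_of_le (ha (by omega))).symm
        _ ≤ Gfun a r + a 1 := add_le_add_left key _

lemma Gfun_zero (a : ℕ → ℝ≥0) : Gfun a 0 = 0 := by
  simp [Gfun, gNsum]

end Stmt8Aux

end

/-- RFC plus a bounded uniformly globally weakly attractive set
implies Lagrange stability. -/
theorem stmt8 {X : Type*} [NormedAddCommGroup X] [NormedSpace ℝ X]
    {W : Type*} [NormedAddCommGroup W] [NormedSpace ℝ W] (S : System X W) (hRFC : S.RFC) (A : Set X) (hA : A.Nonempty)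
    (hAb : IsBounded A) (hW : S.UGWA A) :
    S.LagrangeStable A ∧ S.SystemLagrangeStable := by
  suffices hL : S.LagrangeStable A by exact ⟨hL, A, hA, hAb, hL⟩
  obtain ⟨a₀, ha₀⟩ := hA
  obtain ⟨RA, hRA⟩ := isBounded_iff_forall_norm_le.mp hAb
  set K : ℝ≥0 := RA.toNNReal with hK
  -- basic comparison between dA and the norm
  have hinf_coe : ∀ x : X, Metric.infDist x A ≤ (dA A x : ℝ) := by
    intro x
    rw [dA, Real.coe_toNNReal']
    exact le_max_left _ _
  have dA_le_norm : ∀ x : X, dA A x ≤ ‖x‖₊ + K := by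
    intro x
    have h1 : Metric.infDist x A ≤ ‖x‖ + RA := by
      refine le_trans (Metric.infDist_le_dist_of_mem ha₀) ?_
      rw [dist_eq_norm]
      exact le_trans (norm_sub_le _ _) (by gcongr; exact hRA a₀ ha₀)
    calc dA A x = (Metric.infDist x A).toNNReal := rfl
      _ ≤ (‖x‖ + RA).toNNReal := Real.toNNReal_mono h1
      _ ≤ ‖x‖.toNNReal + RA.toNNReal := Real.toNNReal_add_le
      _ = ‖x‖₊ + K := by rw [norm_toNNReal]
  have norm_le_dA : ∀ x : X, ‖x‖₊ ≤ dA A x + K := by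
    intro x
    have h1 : ‖x‖ - RA ≤ Metric.infDist x A := by
      have : Nonempty A := ⟨⟨a₀, ha₀⟩⟩
      rw [Metric.infDist_eq_iInf]
      refine le_ciInf fun y => ?_
      rw [dist_eq_norm]
      have := norm_sub_norm_le x (y : X)
      have hyR := hRA y y.2
      linarith
    have hRA0 : RA ≤ (K : ℝ) := Real.le_coe_toNNReal RA
    rw [← NNReal.coe_le_coe]
    push_cast
    have := hinf_coe x
    linarith
  -- bound on reach sets through RFC
  have bnd : ∀ r τ : ℝ≥0, ∃ M : ℝ≥0, ∀ x : X, dA A x ≤ r → ∀ d ∈ S.Dist,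
      ∀ t ≤ τ, dA A (S.φ t x d) ≤ M := by
    intro r τ
    have hC : (0 : ℝ≥0) < r + K + 1 := by positivity
    have hτ : (0 : ℝ≥0) < τ + 1 := by positivity
    obtain ⟨C2, hC2⟩ := isBounded_iff_forall_norm_le.mp (hRFC (r + K + 1) hC (τ + 1) hτ)
    refine ⟨C2.toNNReal + K, ?_⟩
    intro x hx d hd t ht
    have hxC : ‖x‖₊ ≤ r + K + 1 :=
      le_trans (norm_le_dA x) (le_trans (add_le_add_left hx K) le_self_add)
    have hmem : S.φ t x d ∈ S.RT (τ + 1) {y : X | ‖y‖₊ ≤ r + K + 1} :=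
      ⟨t, le_trans ht le_self_add, d, hd, x, hxC, rfl⟩
    have h2 : ‖S.φ t x d‖₊ ≤ C2.toNNReal := by
      have := hC2 _ hmem
      rw [← norm_toNNReal]
      exact Real.toNNReal_mono this
    exact le_trans (dA_le_norm _) (by gcongr)
  -- STEP 1 : uniform bound for initial states within distance 1 of A
  obtain ⟨M₀, hM₀⟩ := bnd 1 1
  obtain ⟨τb, hτb⟩ := hW 1 one_pos (M₀ ⊔ 1) (lt_of_lt_of_le one_pos le_sup_right)
  obtain ⟨M₁, hM₁⟩ := bnd 1 (τb + 2)
  have step1 : ∀ x : X, dA A x ≤ 1 → ∀ d ∈ S.Dist, ∀ t : ℝ≥0,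
      dA A (S.φ t x d) ≤ M₁ := by
    intro x hx d hd t
    have hgcont : Continuous (fun s : ℝ≥0 => dA A (S.φ s x d)) := by
      exact continuous_real_toNNReal.comp
        ((Metric.continuous_infDist_pt A).comp (S.cont x d hd))
    set Z : Set ℝ≥0 := {s : ℝ≥0 | s ≤ t ∧ dA A (S.φ s x d) ≤ 1} with hZ
    have h0Z : (0 : ℝ≥0) ∈ Z := ⟨zero_le, by rwa [S.identity x d hd]⟩
    have hZc : IsClosed Z := by
      have : Z = Set.Iic t ∩ {s : ℝ≥0 | dA A (S.φ s x d) ≤ 1} := rfl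
      rw [this]
      exact isClosed_Iic.inter (isClosed_le hgcont continuous_const)
    have hZcpt : IsCompact Z :=
      (isCompact_Icc (a := (0:ℝ≥0)) (b := t)).of_isClosed_subset hZc
        (fun s hs => ⟨zero_le, hs.1⟩)
    have hsZ : sSup Z ∈ Z := hZcpt.sSup_mem ⟨0, h0Z⟩
    set s := sSup Z with hs
    have hsle : s ≤ t := hsZ.1
    have hgs : dA A (S.φ s x d) ≤ 1 := hsZ.2
    have hsup : ∀ u : ℝ≥0, u ≤ t → dA A (S.φ u x d) ≤ 1 → u ≤ s :=
      fun u h1 h2 => le_csSup hZcpt.bddAbove ⟨h1, h2⟩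
    have hd' : (fun u : ℝ≥0 => d (s + u)) ∈ S.Dist := by
      have := S.shift_invariant d hd s
      convert this using 2 with u
      rw [add_comm]
    by_cases hcase : t - s ≤ τb + 2
    · have := hM₁ (S.φ s x d) hgs _ hd' (t - s) hcase
      rwa [S.cocycle s (t - s) x d hd, add_tsub_cancel_of_le hsle] at this
    · exfalso
      push_neg at hcase
      have hst : s + (τb + 2) < t := by
        have := add_lt_add_right hcase s
        rwa [add_tsub_cancel_of_le hsle] at this
      have hz : dA A (S.φ (s + 1) x d) ≤ M₀ := by
        have := hM₀ (S.φ s x d) hgs _ hd' 1 le_rfl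
        rwa [S.cocycle s 1 x d hd] at this
      have hd'' : (fun u : ℝ≥0 => d (s + 1 + u)) ∈ S.Dist := by
        have := S.shift_invariant d hd (s + 1)
        convert this using 2 with u
        rw [add_comm]
      obtain ⟨t', ht'le, ht'⟩ := hτb (S.φ (s + 1) x d) (le_trans hz le_sup_left) _ hd''
      rw [S.cocycle (s + 1) t' x d hd] at ht'
      have hle : s + 1 + t' ≤ t := by
        calc s + 1 + t' = s + (1 + t') := by rw [add_assoc]
          _ ≤ s + (2 + τb) := add_le_add_right (add_le_add one_le_two ht'le) s
          _ = s + (τb + 2) := by rw [add_comm 2 τb]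
          _ ≤ t := hst.le
      have habs := hsup (s + 1 + t') hle ht'
      have : s + 1 ≤ s := le_trans le_self_add habs
      simp at this
  -- STEP 2 : for each radius r there is a uniform bound
  have step2 : ∀ r : ℝ≥0, ∃ M : ℝ≥0, ∀ x : X, dA A x ≤ r → ∀ d ∈ S.Dist,
      ∀ t : ℝ≥0, dA A (S.φ t x d) ≤ M := by
    intro r
    obtain ⟨τr, hτr⟩ := hW 1 one_pos (r ⊔ 1) (lt_of_lt_of_le one_pos le_sup_right)
    obtain ⟨Mr, hMr⟩ := bnd (r ⊔ 1) τr
    refine ⟨Mr ⊔ M₁, ?_⟩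
    intro x hx d hd t
    obtain ⟨t₁, ht₁le, ht₁⟩ := hτr x (le_trans hx le_sup_left) d hd
    rcases le_total t t₁ with h | h
    · exact le_sup_of_le_left (hMr x (le_trans hx le_sup_left) d hd t (le_trans h ht₁le))
    · have hd' : (fun u : ℝ≥0 => d (t₁ + u)) ∈ S.Dist := by
        have := S.shift_invariant d hd t₁
        convert this using 2 with u
        rw [add_comm]
      have := step1 (S.φ t₁ x d) ht₁ _ hd' (t - t₁)
      rw [S.cocycle t₁ (t - t₁) x d hd, add_tsub_cancel_of_le h] at this
      exact le_sup_of_le_right this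
  -- STEP 3 : a monotone sequence of bounds
  choose B hB using step2
  set a : ℕ → ℝ≥0 := fun n => (Finset.range (n + 1)).sup (fun k => B k) with ha
  have haM : Monotone a := by
    intro m n h
    exact Finset.sup_mono (Finset.range_subset_range.mpr (by omega))
  have haB : ∀ n : ℕ, B (n : ℝ≥0) ≤ a n := by
    intro n
    exact Finset.le_sup (f := fun k : ℕ => B (k : ℝ≥0)) (Finset.mem_range.mpr (Nat.lt_succ_self n))
  have hbound : ∀ (x : X), ∀ d ∈ S.Dist, ∀ t : ℝ≥0,
      dA A (S.φ t x d) ≤ a ⌈dA A x⌉₊ := by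
    intro x d hd t
    exact le_trans (hB (⌈dA A x⌉₊ : ℝ≥0) x (Nat.le_ceil _) d hd t) (haB _)
  -- STEP 4 : build the K∞ function
  refine ⟨fun r => r + Stmt8Aux.Gfun a r, ⟨⟨?_, ?_, ?_⟩, ?_⟩, a 1 + 1, ?_, ?_⟩
  · exact continuous_id.add (Stmt8Aux.Gfun_continuous a)
  · exact fun r1 r2 h => add_lt_add_of_lt_of_le h (Stmt8Aux.Gfun_mono a h.le)
  · simp [Stmt8Aux.Gfun_zero]
  · intro M
    exact ⟨M + 1, lt_of_lt_of_le (lt_add_of_pos_right M one_pos) le_self_add⟩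
  · exact lt_of_lt_of_le one_pos le_add_self
  · intro x d hd t
    calc dA A (S.φ t x d) ≤ a ⌈dA A x⌉₊ := hbound x d hd t
      _ ≤ Stmt8Aux.Gfun a (dA A x) + a 1 := Stmt8Aux.Gfun_lower a haM _
      _ ≤ (dA A x + Stmt8Aux.Gfun a (dA A x)) + (a 1 + 1) :=
          add_le_add le_add_self le_self_add
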